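/- Let m ≥ 1, n ≥ m, fix t > 0, fix v ∈ ℝ^m with ‖v‖₂ = 1, and fix l ∈ ℝ^n. Define g : ℝ^{n+m−1} → ℝ by g(h) = Σ_{i=1}^n (|l_i + t·(H(h)v)_i| − |l_i|), where H(h) is the n×m Toeplitz matrix built from the input sequence h = (h_{-m+2},…,h_n). Then g is Lipschitz with constant t√(mn) with respect to the Euclidean norm: for all a, b ∈ ℝ^{n+m−1}, |g(a) − g(b)| ≤ t√(mn)·‖a − b‖₂. -/
import Mathlib


open MeasureTheory ProbabilityTheory Finset Filter

noncomputable section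

/-- The `n × m` Toeplitz matrix built from the input sequence
`h = (h_{-m+2}, …, h_n)`, reindexed as `h : Fin (n+m-1) → ℝ`;
the `(i,j)` entry (0-based) is the input with index `i + j`, which corresponds to
`H_{i,j} = h_{i-m+j}` in 1-based indexing. -/
def toeplitz (n m : ℕ) (h : Fin (n + m - 1) → ℝ) : Matrix (Fin n) (Fin m) ℝ :=
  fun i j => h ⟨i.1 + j.1, by have := i.2; have := j.2; omega⟩

/-- The ℓ¹ norm of a vector in `ℝ^k`. -/
def l1 {k : ℕ} (v : Fin k → ℝ) : ℝ := ∑ i, |v i|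

/-- The Euclidean (ℓ²) norm of a vector in `ℝ^k`. -/
def l2 {k : ℕ} (v : Fin k → ℝ) : ℝ := Real.sqrt (∑ i, (v i) ^ 2)

/-- Product of `d` i.i.d. standard Gaussian `N(0,1)` measures on `ℝ^d`. -/
def gaussPi (d : ℕ) : Measure (Fin d → ℝ) := Measure.pi fun _ => gaussianReal 0 1

/-- The standard Gaussian cumulative distribution function `Φ`. -/
def stdGaussianCDF (t : ℝ) : ℝ :=
  (Real.sqrt (2 * Real.pi))⁻¹ * ∫ x in Set.Iic t, Real.exp (-x ^ 2 / 2)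

open Classical in
/-- Number of nonzero entries of a vector. -/
def sparsity {k : ℕ} (v : Fin k → ℝ) : ℕ := (Finset.univ.filter fun i => v i ≠ 0).card

def temb (n m : ℕ) (i : Fin n) (j : Fin m) : Fin (n + m - 1) :=
  ⟨i.1 + j.1, by have := i.2; have := j.2; omega⟩

/-- For fixed `t > 0`, a fixed unit vector `v` and a fixed `l ∈ ℝ^n`,
the map `h ↦ ∑ᵢ (|lᵢ + t(H(h)v)ᵢ| - |lᵢ|)` on the input sequence `h ∈ ℝ^{n+m-1}` is
Lipschitz with constant `t√(mn)` with respect to the Euclidean norm. -/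
theorem stmt18 (m n : ℕ) (hm : 1 ≤ m) (hmn : m ≤ n) (t : ℝ) (ht : 0 < t)
    (v : Fin m → ℝ) (hv : l2 v = 1) (l : Fin n → ℝ)
    (a b : Fin (n + m - 1) → ℝ) :
    |(∑ i, (|l i + t * (toeplitz n m a).mulVec v i| - |l i|)) -
        (∑ i, (|l i + t * (toeplitz n m b).mulVec v i| - |l i|))| ≤
      t * Real.sqrt ((m : ℝ) * n) * l2 (a - b) := by
  set c : Fin (n + m - 1) → ℝ := a - b with hc
  have hveq : ∑ j, (v j) ^ 2 = 1 := by
    have h1 : Real.sqrt (∑ j, (v j) ^ 2) = 1 := hv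
    have hnn : 0 ≤ ∑ j, (v j) ^ 2 := Finset.sum_nonneg fun _ _ => sq_nonneg _
    nlinarith [Real.sq_sqrt hnn]
  set w : Fin n → ℝ := (toeplitz n m c).mulVec v with hw
  have hwdiff : ∀ i, (toeplitz n m a).mulVec v i - (toeplitz n m b).mulVec v i = w i := by
    intro i
    simp only [hw, Matrix.mulVec, dotProduct, toeplitz, hc, Pi.sub_apply,
      ← Finset.sum_sub_distrib, sub_mul]
  have step1 : |(∑ i, (|l i + t * (toeplitz n m a).mulVec v i| - |l i|)) -
        (∑ i, (|l i + t * (toeplitz n m b).mulVec v i| - |l i|))| ≤ t * ∑ i, |w i| := by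
    rw [← Finset.sum_sub_distrib, Finset.mul_sum]
    refine (Finset.abs_sum_le_sum_abs _ _).trans (Finset.sum_le_sum fun i _ => ?_)
    have h1 : (|l i + t * (toeplitz n m a).mulVec v i| - |l i|) -
        (|l i + t * (toeplitz n m b).mulVec v i| - |l i|) =
        |l i + t * (toeplitz n m a).mulVec v i| - |l i + t * (toeplitz n m b).mulVec v i| := by
      ring
    rw [h1]
    refine (abs_abs_sub_abs_le_abs_sub _ _).trans ?_
    have h2 : (l i + t * (toeplitz n m a).mulVec v i) - (l i + t * (toeplitz n m b).mulVec v i)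
        = t * w i := by rw [← hwdiff i]; ring
    rw [h2, abs_mul, abs_of_pos ht]
  have step3 : ∀ i, (w i) ^ 2 ≤ ∑ j : Fin m, (c (temb n m i j)) ^ 2 := by
    intro i
    have hcs := Finset.sum_mul_sq_le_sq_mul_sq Finset.univ (fun j : Fin m => c (temb n m i j)) v
    have hwi : w i = ∑ j : Fin m, c (temb n m i j) * v j := rfl
    rw [hwi]
    calc (∑ j : Fin m, c (temb n m i j) * v j) ^ 2
        ≤ (∑ j : Fin m, (c (temb n m i j)) ^ 2) * ∑ j, (v j) ^ 2 := hcs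
      _ = ∑ j : Fin m, (c (temb n m i j)) ^ 2 := by rw [hveq, mul_one]
  have step4 : ∑ i : Fin n, ∑ j : Fin m, (c (temb n m i j)) ^ 2 ≤ (m : ℝ) * ∑ k, (c k) ^ 2 := by
    rw [Finset.sum_comm]
    calc ∑ j : Fin m, ∑ i : Fin n, (c (temb n m i j)) ^ 2
        ≤ ∑ _j : Fin m, ∑ k, (c k) ^ 2 := by
          refine Finset.sum_le_sum fun j _ => ?_
          have hemb : Function.Injective (fun i : Fin n => temb n m i j) := by
            intro x y hxy
            have : x.1 + j.1 = y.1 + j.1 := congrArg Fin.val hxy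
            exact Fin.ext (by omega)
          calc ∑ i : Fin n, (c (temb n m i j)) ^ 2
              = ∑ k ∈ Finset.univ.image (fun i : Fin n => temb n m i j), (c k) ^ 2 := by
                rw [Finset.sum_image (fun x _ y _ h => hemb h)]
            _ ≤ ∑ k, (c k) ^ 2 := Finset.sum_le_sum_of_subset_of_nonneg
                (Finset.subset_univ _) (fun _ _ _ => sq_nonneg _)
      _ = (m : ℝ) * ∑ k, (c k) ^ 2 := by
          rw [Finset.sum_const, Finset.card_univ, Fintype.card_fin, nsmul_eq_mul]
  have hsw : ∑ i, (w i) ^ 2 ≤ (m : ℝ) * ∑ k, (c k) ^ 2 :=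
    (Finset.sum_le_sum fun i _ => step3 i).trans step4
  have step2 : ∑ i, |w i| ≤ Real.sqrt n * Real.sqrt (∑ i, (w i) ^ 2) := by
    have hcs := Finset.sum_mul_sq_le_sq_mul_sq Finset.univ (fun _ : Fin n => (1 : ℝ))
      (fun i => |w i|)
    simp only [one_mul, one_pow, Finset.sum_const, Finset.card_univ, Fintype.card_fin,
      nsmul_eq_mul, mul_one, sq_abs] at hcs
    rw [← Real.sqrt_mul (by positivity)]
    exact (Real.le_sqrt (Finset.sum_nonneg fun _ _ => abs_nonneg _) (by positivity)).mpr hcs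
  calc |(∑ i, (|l i + t * (toeplitz n m a).mulVec v i| - |l i|)) -
        (∑ i, (|l i + t * (toeplitz n m b).mulVec v i| - |l i|))|
      ≤ t * ∑ i, |w i| := step1
    _ ≤ t * (Real.sqrt n * Real.sqrt (∑ i, (w i) ^ 2)) := by
        exact mul_le_mul_of_nonneg_left step2 ht.le
    _ ≤ t * (Real.sqrt n * Real.sqrt ((m : ℝ) * ∑ k, (c k) ^ 2)) := by
        gcongr
    _ = t * Real.sqrt ((m : ℝ) * n) * l2 c := by
        rw [l2, Real.sqrt_mul (by positivity), Real.sqrt_mul (by positivity)]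
        ring
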